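/- arXiv:1007.0231 — 3 statements merged into one kernel-verified Lean document; each statement's English description precedes it below -/
import Mathlib

section
/- Almost-orthogonality of wave packets with separated frequencies: Let c > 0 and let C₀, C₁, C₂ ≥ 0. There is a constant C such that the following holds for every λ ≥ 1. Suppose (p_k)_{k∈ℤ} is a finitely supported family of complex numbers, (ω_k)_{k∈ℤ} is a family of real numbers satisfying |ω_k − ω_ℓ| ≥ c λ^{−1/2} |k−ℓ| whenever |k−ℓ| ≥ 2, and for each k, ρ_k : ℝ → ℂ is a twice continuously differentiable function supported in {τ : |τ| ≤ λ^{−1/2}} with |ρ_k^{(m)}(τ)| ≤ C_m λ^{m/2} for m = 0, 1, 2 and all τ. Then λ^{1/2} ∫_ℝ | Σ_{k∈ℤ} e^{iλ ω_k τ} ρ_k(τ) p_k |² dτ ≤ C Σ_{k∈ℤ} |p_k|². -/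
open MeasureTheory

lemma norm_integral_le_two_R (f : ℝ → ℂ) (R A : ℝ) (hR : 0 < R) (hA : 0 ≤ A)
    (hf : Continuous f) (hsupp : ∀ τ : ℝ, R < |τ| → f τ = 0) (hbd : ∀ τ, ‖f τ‖ ≤ A) :
    ‖∫ τ : ℝ, f τ‖ ≤ 2 * R * A := by
  have h1 : ∫ τ : ℝ, f τ = ∫ τ in Set.Icc (-R) R, f τ := by
    refine (setIntegral_eq_integral_of_forall_compl_eq_zero fun x hx => ?_).symm
    refine hsupp x ?_
    rw [Set.mem_Icc, not_and_or, not_le, not_le] at hx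
    rcases hx with h | h
    · exact lt_abs.mpr (Or.inr (by linarith))
    · exact lt_abs.mpr (Or.inl h)
  rw [h1]
  have := norm_setIntegral_le_of_norm_le_const (μ := volume) (s := Set.Icc (-R) R)
    (f := f) (C := A) (by simp [Real.volume_Icc])
    (fun x _ => hbd x)
  rw [measureReal_def, Real.volume_Icc] at this
  calc ‖∫ τ in Set.Icc (-R) R, f τ‖ ≤ A * (ENNReal.ofReal (R - -R)).toReal := this
    _ = 2 * R * A := by rw [ENNReal.toReal_ofReal (by linarith)]; ring

lemma integral_norm_le_two_R (f : ℝ → ℂ) (R A : ℝ) (hR : 0 < R) (hA : 0 ≤ A)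
    (hf : Continuous f) (hsupp : ∀ τ : ℝ, R < |τ| → f τ = 0) (hbd : ∀ τ, ‖f τ‖ ≤ A) :
    (∫ τ : ℝ, ‖f τ‖) ≤ 2 * R * A := by
  have h1 : ∫ τ : ℝ, ‖f τ‖ = ∫ τ in Set.Icc (-R) R, ‖f τ‖ := by
    refine (setIntegral_eq_integral_of_forall_compl_eq_zero fun x hx => ?_).symm
    have : f x = 0 := by
      refine hsupp x ?_
      rw [Set.mem_Icc, not_and_or, not_le, not_le] at hx
      rcases hx with h | h
      · exact lt_abs.mpr (Or.inr (by linarith))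
      · exact lt_abs.mpr (Or.inl h)
    simp [this]
  rw [h1]
  refine le_trans (le_abs_self _) ?_
  rw [← Real.norm_eq_abs]
  have := norm_setIntegral_le_of_norm_le_const (μ := volume) (s := Set.Icc (-R) R)
    (f := fun τ => ‖f τ‖) (C := A) (by simp [Real.volume_Icc])
    (fun x _ => by simpa using hbd x)
  rw [measureReal_def, Real.volume_Icc] at this
  calc ‖∫ τ in Set.Icc (-R) R, ‖f τ‖‖ ≤ A * (ENNReal.ofReal (R - -R)).toReal := this
    _ = 2 * R * A := by rw [ENNReal.toReal_ofReal (by linarith)]; ring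


open Real FourierTransform Complex in
lemma osc_bound (g : ℝ → ℂ) (R B : ℝ) (hR : 0 < R) (hB : 0 ≤ B)
    (hg : ContDiff ℝ 2 g) (hsupp : ∀ τ : ℝ, R < |τ| → g τ = 0)
    (hbd : ∀ τ, ‖deriv (deriv g) τ‖ ≤ B) (a : ℝ) (ha : a ≠ 0) :
    ‖∫ τ : ℝ, Complex.exp (Complex.I * (a * τ)) * g τ‖ ≤ 2 * R * B / a ^ 2 := by
  have hopen : IsOpen {x : ℝ | R < |x|} := isOpen_lt continuous_const continuous_abs
  have hderiv_supp : ∀ (f : ℝ → ℂ), (∀ τ : ℝ, R < |τ| → f τ = 0) →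
      ∀ τ : ℝ, R < |τ| → deriv f τ = 0 := by
    intro f hf τ hτ
    have hev : f =ᶠ[nhds τ] (fun _ => 0) :=
      Filter.eventuallyEq_of_mem (hopen.mem_nhds hτ) hf
    rw [hev.deriv_eq, deriv_const]
  have hcs : ∀ (f : ℝ → ℂ), (∀ τ : ℝ, R < |τ| → f τ = 0) → HasCompactSupport f := by
    intro f hf
    refine HasCompactSupport.intro (isCompact_Icc (a := -R) (b := R)) fun x hx => hf x ?_
    rw [Set.mem_Icc, not_and_or, not_le, not_le] at hx
    rcases hx with h | h
    · exact lt_abs.mpr (Or.inr (by linarith))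
    · exact lt_abs.mpr (Or.inl h)
  have hsupp' := hderiv_supp g hsupp
  have hsupp'' := hderiv_supp _ hsupp'
  have hdg : Differentiable ℝ g := hg.differentiable two_ne_zero
  have hg' : ContDiff ℝ 1 (deriv g) := by
    have := (contDiff_succ_iff_deriv (n := 1)).mp (by exact_mod_cast hg)
    exact this.2.2
  have hdg' : Differentiable ℝ (deriv g) := hg'.differentiable one_ne_zero
  have hcg' : Continuous (deriv g) := hdg'.continuous
  have hcg'' : Continuous (deriv (deriv g)) := (contDiff_one_iff_deriv.mp hg').2
  have hint : Integrable g := (hg.continuous.integrable_of_hasCompactSupport (hcs g hsupp))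
  have hint' : Integrable (deriv g) :=
    hcg'.integrable_of_hasCompactSupport (hcs _ hsupp')
  have hint'' : Integrable (deriv (deriv g)) :=
    hcg''.integrable_of_hasCompactSupport (hcs _ hsupp'')
  -- Fourier transform identities
  have hF1 : 𝓕 (deriv g) = fun x : ℝ => (2 * π * I * x) • 𝓕 g x :=
    Real.fourier_deriv hint hdg hint'
  have hF2 : 𝓕 (deriv (deriv g)) = fun x : ℝ => (2 * π * I * x) • 𝓕 (deriv g) x :=
    Real.fourier_deriv hint' hdg' hint''
  set x₀ : ℝ := -(a / (2 * π)) with hx₀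
  have hπ : (π : ℝ) ≠ 0 := Real.pi_ne_zero
  -- our integral equals 𝓕 g x₀
  have hId : (∫ τ : ℝ, Complex.exp (Complex.I * (a * τ)) * g τ) = 𝓕 g x₀ := by
    rw [Real.fourier_eq']
    refine integral_congr_ae (Filter.Eventually.of_forall fun v => ?_)
    simp only [smul_eq_mul]
    have hi : (inner ℝ v x₀ : ℝ) = v * x₀ := by
      rw [RCLike.inner_apply, conj_trivial, mul_comm]
    rw [hi]
    have harg : -2 * π * (v * x₀) = a * v := by
      rw [hx₀]; field_simp
    rw [harg]
    congr 1
    push_cast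
    ring
  -- norm bound for 𝓕 g''
  have hnorm2 : ‖𝓕 (deriv (deriv g)) x₀‖ ≤ 2 * R * B := by
    refine le_trans (VectorFourier.norm_fourierIntegral_le_integral_norm _ _ _ _ _) ?_
    exact integral_norm_le_two_R _ R B hR hB hcg'' hsupp'' hbd
  -- relation of norms
  have hrel : ‖𝓕 (deriv (deriv g)) x₀‖ = a ^ 2 * ‖𝓕 g x₀‖ := by
    have key : ‖(2 : ℂ) * ↑π * I * ↑x₀‖ = |a| := by
      simp only [norm_mul, Complex.norm_I, Complex.norm_real, Complex.norm_ofNat,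
        mul_one]
      rw [hx₀]
      rw [Real.norm_eq_abs, Real.norm_eq_abs, abs_neg, abs_div, abs_mul]
      rw [_root_.abs_two, abs_of_pos Real.pi_pos]
      field_simp
    have hpt : 𝓕 (deriv (deriv g)) x₀ =
        (2 * ↑π * I * ↑x₀) • ((2 * ↑π * I * ↑x₀) • 𝓕 g x₀) := by
      rw [hF2]; simp only [hF1]
    rw [hpt, norm_smul, norm_smul, key, ← mul_assoc, ← sq, _root_.sq_abs]
  rw [hId]
  rw [hrel] at hnorm2
  have ha2 : (0:ℝ) < a ^ 2 := by positivity
  calc ‖𝓕 g x₀‖ = (a ^ 2 * ‖𝓕 g x₀‖) / a ^ 2 := by field_simp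
    _ ≤ (2 * R * B) / a ^ 2 := (div_le_div_iff_of_pos_right ha2).mpr hnorm2

lemma prod_conj_contDiff (ρ1 ρ2 : ℝ → ℂ) (h1 : ContDiff ℝ 2 ρ1) (h2 : ContDiff ℝ 2 ρ2) :
    ContDiff ℝ 2 (fun t => ρ1 t * (starRingEnd ℂ) (ρ2 t)) :=
  h1.mul (Complex.conjCLE.contDiff.comp h2)

lemma prod_conj_deriv2_bound (ρ1 ρ2 : ℝ → ℂ) (h1 : ContDiff ℝ 2 ρ1) (h2 : ContDiff ℝ 2 ρ2)
    (A0 A1 A2 : ℝ)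
    (b10 : ∀ τ, ‖ρ1 τ‖ ≤ A0) (b11 : ∀ τ, ‖deriv ρ1 τ‖ ≤ A1)
    (b12 : ∀ τ, ‖deriv (deriv ρ1) τ‖ ≤ A2)
    (b20 : ∀ τ, ‖ρ2 τ‖ ≤ A0) (b21 : ∀ τ, ‖deriv ρ2 τ‖ ≤ A1)
    (b22 : ∀ τ, ‖deriv (deriv ρ2) τ‖ ≤ A2) :
    ∀ τ, ‖deriv (deriv (fun t => ρ1 t * (starRingEnd ℂ) (ρ2 t))) τ‖ ≤ 2 * A0 * A2 + 2 * A1 ^ 2 := by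
  have hA0 : 0 ≤ A0 := le_trans (norm_nonneg _) (b10 0)
  have hA1 : 0 ≤ A1 := le_trans (norm_nonneg _) (b11 0)
  have hA2 : 0 ≤ A2 := le_trans (norm_nonneg _) (b12 0)
  have d1 : Differentiable ℝ ρ1 := h1.differentiable two_ne_zero
  have d2 : Differentiable ℝ ρ2 := h2.differentiable two_ne_zero
  have h1' : ContDiff ℝ 1 (deriv ρ1) := ((contDiff_succ_iff_deriv (n := 1)).mp
    (by exact_mod_cast h1)).2.2
  have h2' : ContDiff ℝ 1 (deriv ρ2) := ((contDiff_succ_iff_deriv (n := 1)).mp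
    (by exact_mod_cast h2)).2.2
  have d1' : Differentiable ℝ (deriv ρ1) := h1'.differentiable one_ne_zero
  have d2' : Differentiable ℝ (deriv ρ2) := h2'.differentiable one_ne_zero
  have H : ∀ τ : ℝ, HasDerivAt (fun t => ρ1 t * (starRingEnd ℂ) (ρ2 t))
      (deriv ρ1 τ * (starRingEnd ℂ) (ρ2 τ) + ρ1 τ * (starRingEnd ℂ) (deriv ρ2 τ)) τ := by
    intro τ
    exact ((d1 τ).hasDerivAt).mul ((d2 τ).hasDerivAt.star)
  have hg' : deriv (fun t => ρ1 t * (starRingEnd ℂ) (ρ2 t)) =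
      fun τ => deriv ρ1 τ * (starRingEnd ℂ) (ρ2 τ) + ρ1 τ * (starRingEnd ℂ) (deriv ρ2 τ) :=
    funext fun τ => (H τ).deriv
  intro τ
  have H2 : HasDerivAt
      (fun t => deriv ρ1 t * (starRingEnd ℂ) (ρ2 t) + ρ1 t * (starRingEnd ℂ) (deriv ρ2 t))
      (deriv (deriv ρ1) τ * (starRingEnd ℂ) (ρ2 τ) + deriv ρ1 τ * (starRingEnd ℂ) (deriv ρ2 τ)
        + (deriv ρ1 τ * (starRingEnd ℂ) (deriv ρ2 τ)
          + ρ1 τ * (starRingEnd ℂ) (deriv (deriv ρ2) τ))) τ :=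
    (((d1' τ).hasDerivAt).mul ((d2 τ).hasDerivAt.star)).add
      (((d1 τ).hasDerivAt).mul ((d2' τ).hasDerivAt.star))
  rw [hg', H2.deriv]
  have hc : ∀ z : ℂ, ‖(starRingEnd ℂ) z‖ = ‖z‖ := fun z => RCLike.norm_conj z
  calc ‖deriv (deriv ρ1) τ * (starRingEnd ℂ) (ρ2 τ) + deriv ρ1 τ * (starRingEnd ℂ) (deriv ρ2 τ)
        + (deriv ρ1 τ * (starRingEnd ℂ) (deriv ρ2 τ)
          + ρ1 τ * (starRingEnd ℂ) (deriv (deriv ρ2) τ))‖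
      ≤ ‖deriv (deriv ρ1) τ‖ * ‖ρ2 τ‖ + ‖deriv ρ1 τ‖ * ‖deriv ρ2 τ‖
        + (‖deriv ρ1 τ‖ * ‖deriv ρ2 τ‖ + ‖ρ1 τ‖ * ‖deriv (deriv ρ2) τ‖) := by
        refine le_trans (norm_add_le _ _) (add_le_add (le_trans (norm_add_le _ _) ?_)
          (le_trans (norm_add_le _ _) ?_)) <;>
          simp only [norm_mul, hc] <;> exact le_rfl
    _ ≤ A2 * A0 + A1 * A1 + (A1 * A1 + A0 * A2) := by
        gcongr <;> first
          | exact b10 τ | exact b11 τ | exact b12 τ | exact b20 τ | exact b21 τ | exact b22 τ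
    _ = 2 * A0 * A2 + 2 * A1 ^ 2 := by ring

set_option maxHeartbeats 1000000 in
/-- **Almost-orthogonality of wave packets with separated frequencies.** Let `c > 0` and
`C₀, C₁, C₂ ≥ 0`. There is a constant `C` such that for every `λ ≥ 1`, every finitely
supported family `(p_k)_{k∈ℤ}` of complex numbers, every family `(ω_k)_{k∈ℤ}` of reals with
`|ω_k − ω_ℓ| ≥ c λ^{−1/2} |k−ℓ|` whenever `|k−ℓ| ≥ 2`, and every family of C² functions
`ρ_k` supported in `{|τ| ≤ λ^{−1/2}}` with `|ρ_k^{(m)}(τ)| ≤ C_m λ^{m/2}` for `m = 0,1,2`,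
one has `λ^{1/2} ∫ |Σ_k e^{iλω_kτ} ρ_k(τ) p_k|² dτ ≤ C Σ_k |p_k|²`. -/
theorem almost_orthogonality_wave_packets
    (c : ℝ) (hc : 0 < c) (C₀ C₁ C₂ : ℝ) (h₀ : 0 ≤ C₀) (h₁ : 0 ≤ C₁) (h₂ : 0 ≤ C₂) :
    ∃ C : ℝ, ∀ lam : ℝ, 1 ≤ lam →
      ∀ p : ℤ → ℂ, (Function.support p).Finite →
      ∀ ω : ℤ → ℝ,
        (∀ k l : ℤ, 2 ≤ |k - l| →
          c * lam ^ (-(1 : ℝ) / 2) * |(k : ℝ) - (l : ℝ)| ≤ |ω k - ω l|) →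
      ∀ ρ : ℤ → ℝ → ℂ,
        (∀ k : ℤ, ContDiff ℝ 2 (ρ k)) →
        (∀ (k : ℤ) (τ : ℝ), lam ^ (-(1 : ℝ) / 2) < |τ| → ρ k τ = 0) →
        (∀ (k : ℤ) (τ : ℝ), ‖ρ k τ‖ ≤ C₀) →
        (∀ (k : ℤ) (τ : ℝ), ‖deriv (ρ k) τ‖ ≤ C₁ * lam ^ ((1 : ℝ) / 2)) →
        (∀ (k : ℤ) (τ : ℝ), ‖deriv (deriv (ρ k)) τ‖ ≤ C₂ * lam) →
        lam ^ ((1 : ℝ) / 2) *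
            ∫ τ : ℝ, ‖∑' k : ℤ, Complex.exp (Complex.I * ((lam * ω k * τ : ℝ) : ℂ)) * ρ k τ * p k‖ ^ 2 ≤
          C * ∑' k : ℤ, ‖p k‖ ^ 2 := by
  classical
  set Bc : ℝ := 2 * C₀ * C₂ + 2 * C₁ ^ 2 with hBc
  have hBc0 : 0 ≤ Bc := by positivity
  set D : ℝ := 2 * Bc / c ^ 2 with hD
  have hD0 : 0 ≤ D := by positivity
  set φ : ℤ → ℝ := fun n => if |n| ≤ 1 then 2 * C₀ ^ 2 else D / (n : ℝ) ^ 2 with hφ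
  have hφ0 : ∀ n, 0 ≤ φ n := by
    intro n
    rw [hφ]
    dsimp only
    split
    · positivity
    · positivity
  have hφS : Summable φ := by
    have h1 : Summable (fun n : ℤ => if |n| ≤ 1 then 2 * C₀ ^ 2 else 0) := by
      apply summable_of_finite_support
      apply Set.Finite.subset (Set.finite_Icc (-1 : ℤ) 1)
      intro n hn
      simp only [Function.mem_support, ne_eq, ite_eq_right_iff, not_forall] at hn
      simp only [Set.mem_Icc]
      rw [← abs_le]
      exact hn.1
    have h2 : Summable (fun n : ℤ => if |n| ≤ 1 then 0 else D / (n : ℝ) ^ 2) := by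
      refine Summable.of_nonneg_of_le (fun n => ?_) (fun n => ?_)
        (((Real.summable_one_div_int_pow (p := 2)).mpr one_lt_two).mul_left D)
      · split <;> positivity
      · split
        · positivity
        · rw [div_eq_mul_one_div]
    have := h1.add h2
    refine this.congr fun n => ?_
    rw [hφ]
    dsimp only
    split <;> simp
  set T : ℝ := ∑' n : ℤ, φ n with hT
  refine ⟨T, ?_⟩
  intro lam hlam p hp ω hω ρ hρC hρsupp hρ0 hρ1 hρ2
  have hlam0 : (0:ℝ) < lam := lt_of_lt_of_le one_pos hlam
  set R : ℝ := lam ^ (-(1:ℝ)/2) with hR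
  have hRpos : 0 < R := Real.rpow_pos_of_pos hlam0 _
  have hhalf : lam ^ ((1:ℝ)/2) * R = 1 := by
    rw [hR, ← Real.rpow_add hlam0]
    norm_num
  have hhalf2 : (lam ^ ((1:ℝ)/2)) ^ 2 = lam := by
    rw [← Real.rpow_natCast (lam ^ ((1:ℝ)/2)) 2, ← Real.rpow_mul hlam0.le]
    norm_num
  have hRsq : R ^ 2 = lam⁻¹ := by
    rw [hR, ← Real.rpow_natCast (lam ^ (-(1:ℝ)/2)) 2, ← Real.rpow_mul hlam0.le]
    norm_num [Real.rpow_neg_one]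
  set s : Finset ℤ := hp.toFinset with hs
  have hps : ∀ k, k ∉ s → p k = 0 := by
    intro k hk
    rw [hs, Set.Finite.mem_toFinset] at hk
    exact Function.notMem_support.mp hk
  set F : ℤ → ℝ → ℂ :=
    fun k τ => Complex.exp (Complex.I * ((lam * ω k * τ : ℝ) : ℂ)) * ρ k τ * p k with hF
  have h_tsum : ∀ τ : ℝ, (∑' k : ℤ, F k τ) = ∑ k ∈ s, F k τ := by
    intro τ
    refine tsum_eq_sum fun k hk => ?_
    rw [hF]
    simp [hps k hk]
  set J : ℤ → ℤ → ℂ := fun k l =>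
    ∫ τ : ℝ, Complex.exp (Complex.I * ((lam * (ω k - ω l) * τ : ℝ) : ℂ)) *
      (ρ k τ * (starRingEnd ℂ) (ρ l τ)) with hJ
  -- continuity and integrability
  have hcont : ∀ k l : ℤ, Continuous fun τ => F k τ * (starRingEnd ℂ) (F l τ) := by
    intro k l
    rw [hF]
    simp only [starRingEnd_apply]
    have := (hρC k).continuous
    have := (hρC l).continuous
    fun_prop
  have hsuppFF : ∀ (k l : ℤ) (τ : ℝ), R < |τ| → F k τ * (starRingEnd ℂ) (F l τ) = 0 := by
    intro k l τ hτ
    rw [hF]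
    simp [hρsupp k τ hτ]
  have hcsFF : ∀ k l : ℤ, HasCompactSupport fun τ => F k τ * (starRingEnd ℂ) (F l τ) := by
    intro k l
    refine HasCompactSupport.intro (isCompact_Icc (a := -R) (b := R)) fun x hx =>
      hsuppFF k l x ?_
    rw [Set.mem_Icc, not_and_or, not_le, not_le] at hx
    rcases hx with h | h
    · exact lt_abs.mpr (Or.inr (by linarith))
    · exact lt_abs.mpr (Or.inl h)
  have hFFint : ∀ k l : ℤ, Integrable fun τ => F k τ * (starRingEnd ℂ) (F l τ) :=
    fun k l => (hcont k l).integrable_of_hasCompactSupport (hcsFF k l)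
  -- the key integral identity
  have hI : (∫ τ : ℝ, ‖∑' k : ℤ, F k τ‖ ^ 2) =
      ∑ k ∈ s, ∑ l ∈ s, (∫ τ : ℝ, F k τ * (starRingEnd ℂ) (F l τ)).re := by
    have step1 : ∀ τ : ℝ, ‖∑' k : ℤ, F k τ‖ ^ 2 =
        (∑ k ∈ s, ∑ l ∈ s, F k τ * (starRingEnd ℂ) (F l τ)).re := by
      intro τ
      rw [h_tsum τ]
      have hz : ∀ z : ℂ, ‖z‖ ^ 2 = (z * (starRingEnd ℂ) z).re := by
        intro z
        rw [Complex.mul_conj, Complex.ofReal_re, Complex.normSq_eq_norm_sq]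
      rw [hz]
      congr 1
      rw [map_sum, Finset.sum_mul_sum]
    have hGint : Integrable fun τ => ∑ k ∈ s, ∑ l ∈ s, F k τ * (starRingEnd ℂ) (F l τ) := by
      apply integrable_finset_sum
      intro k _
      exact integrable_finset_sum _ fun l _ => hFFint k l
    calc (∫ τ : ℝ, ‖∑' k : ℤ, F k τ‖ ^ 2)
        = ∫ τ : ℝ, (∑ k ∈ s, ∑ l ∈ s, F k τ * (starRingEnd ℂ) (F l τ)).re := by
          exact integral_congr_ae (Filter.Eventually.of_forall fun τ => step1 τ)
      _ = (∫ τ : ℝ, ∑ k ∈ s, ∑ l ∈ s, F k τ * (starRingEnd ℂ) (F l τ)).re := by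
          exact integral_re hGint
      _ = ∑ k ∈ s, ∑ l ∈ s, (∫ τ : ℝ, F k τ * (starRingEnd ℂ) (F l τ)).re := by
          rw [integral_finset_sum _ fun k _ => integrable_finset_sum _ fun l _ => hFFint k l]
          rw [Complex.re_sum]
          refine Finset.sum_congr rfl fun k _ => ?_
          rw [integral_finset_sum _ fun l _ => hFFint k l, Complex.re_sum]
  have hIdent : ∀ k l : ℤ, (∫ τ : ℝ, F k τ * (starRingEnd ℂ) (F l τ)) =
      (p k * (starRingEnd ℂ) (p l)) * J k l := by
    intro k l
    have hpt : ∀ τ : ℝ, F k τ * (starRingEnd ℂ) (F l τ) =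
        (p k * (starRingEnd ℂ) (p l)) *
          (Complex.exp (Complex.I * ((lam * (ω k - ω l) * τ : ℝ) : ℂ)) *
            (ρ k τ * (starRingEnd ℂ) (ρ l τ))) := by
      intro τ
      rw [hF]
      dsimp only
      rw [map_mul, map_mul, ← Complex.exp_conj, map_mul, Complex.conj_I, Complex.conj_ofReal]
      have hexp : Complex.exp (Complex.I * ((lam * ω k * τ : ℝ) : ℂ)) *
          Complex.exp (-Complex.I * ((lam * ω l * τ : ℝ) : ℂ)) =
          Complex.exp (Complex.I * ((lam * (ω k - ω l) * τ : ℝ) : ℂ)) := by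
        rw [← Complex.exp_add]
        congr 1
        push_cast
        ring
      calc Complex.exp (Complex.I * ((lam * ω k * τ : ℝ) : ℂ)) * ρ k τ * p k *
            (Complex.exp (-Complex.I * ((lam * ω l * τ : ℝ) : ℂ)) *
              (starRingEnd ℂ) (ρ l τ) * (starRingEnd ℂ) (p l))
          = (p k * (starRingEnd ℂ) (p l)) *
            ((Complex.exp (Complex.I * ((lam * ω k * τ : ℝ) : ℂ)) *
              Complex.exp (-Complex.I * ((lam * ω l * τ : ℝ) : ℂ))) *
              (ρ k τ * (starRingEnd ℂ) (ρ l τ))) := by ring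
        _ = _ := by rw [hexp]
    rw [hJ]
    dsimp only
    rw [integral_congr_ae (Filter.Eventually.of_forall hpt), MeasureTheory.integral_const_mul]
  -- bound on J
  have hJb : ∀ k l : ℤ, lam ^ ((1:ℝ)/2) * ‖J k l‖ ≤ φ (k - l) := by
    intro k l
    have hcontJ : Continuous fun τ : ℝ =>
        Complex.exp (Complex.I * ((lam * (ω k - ω l) * τ : ℝ) : ℂ)) *
          (ρ k τ * (starRingEnd ℂ) (ρ l τ)) := by
      simp only [starRingEnd_apply]
      have := (hρC k).continuous
      have := (hρC l).continuous
      fun_prop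
    have hsuppJ : ∀ τ : ℝ, R < |τ| →
        Complex.exp (Complex.I * ((lam * (ω k - ω l) * τ : ℝ) : ℂ)) *
          (ρ k τ * (starRingEnd ℂ) (ρ l τ)) = 0 := by
      intro τ hτ
      simp [hρsupp k τ hτ]
    have hexp1 : ∀ x τ : ℝ, ‖Complex.exp (Complex.I * ((x * τ : ℝ) : ℂ))‖ = 1 := by
      intro x τ
      rw [mul_comm]
      exact Complex.norm_exp_ofReal_mul_I _
    by_cases hkl : |k - l| ≤ 1
    · -- trivial bound
      have hb : ∀ τ : ℝ, ‖Complex.exp (Complex.I * ((lam * (ω k - ω l) * τ : ℝ) : ℂ)) *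
          (ρ k τ * (starRingEnd ℂ) (ρ l τ))‖ ≤ C₀ ^ 2 := by
        intro τ
        rw [norm_mul, hexp1, one_mul, norm_mul, RCLike.norm_conj, sq]
        exact mul_le_mul (hρ0 k τ) (hρ0 l τ) (norm_nonneg _) h₀
      have h1 : ‖J k l‖ ≤ 2 * R * C₀ ^ 2 := by
        rw [hJ]
        exact norm_integral_le_two_R _ R (C₀ ^ 2) hRpos (by positivity) hcontJ hsuppJ hb
      have : lam ^ ((1:ℝ)/2) * ‖J k l‖ ≤ lam ^ ((1:ℝ)/2) * (2 * R * C₀ ^ 2) :=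
        mul_le_mul_of_nonneg_left h1 (Real.rpow_nonneg hlam0.le _)
      refine this.trans ?_
      have heq : lam ^ ((1:ℝ)/2) * (2 * R * C₀ ^ 2) = 2 * C₀ ^ 2 := by
        calc lam ^ ((1:ℝ)/2) * (2 * R * C₀ ^ 2)
            = (lam ^ ((1:ℝ)/2) * R) * (2 * C₀ ^ 2) := by ring
          _ = 2 * C₀ ^ 2 := by rw [hhalf, one_mul]
      rw [heq, hφ]
      simp only [if_pos hkl]
      try exact le_rfl
    · -- oscillatory bound
      have hkl2 : 2 ≤ |k - l| := by omega
      have hkl2R : (2:ℝ) ≤ |(k:ℝ) - (l:ℝ)| := by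
        have h' : ((2:ℤ):ℝ) ≤ ((|k - l| : ℤ) : ℝ) := Int.cast_le.mpr hkl2
        push_cast at h'
        exact h'
      have hΔpos : (0:ℝ) < |(k:ℝ) - (l:ℝ)| := lt_of_lt_of_le two_pos hkl2R
      have hΔ : (k:ℝ) - (l:ℝ) ≠ 0 := fun h => by simp [h] at hΔpos
      have hsep : c * R * |(k:ℝ) - (l:ℝ)| ≤ |ω k - ω l| := hω k l hkl2
      have hωpos : 0 < |ω k - ω l| :=
        lt_of_lt_of_le (by positivity) hsep
      set a : ℝ := lam * (ω k - ω l) with haa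
      have ha : a ≠ 0 := mul_ne_zero hlam0.ne' (abs_pos.mp hωpos)
      have hgC : ContDiff ℝ 2 (fun t => ρ k t * (starRingEnd ℂ) (ρ l t)) :=
        prod_conj_contDiff _ _ (hρC k) (hρC l)
      have hgsupp : ∀ τ : ℝ, R < |τ| → ρ k τ * (starRingEnd ℂ) (ρ l τ) = 0 := by
        intro τ hτ
        simp [hρsupp k τ hτ]
      have hBeq : 2 * C₀ * (C₂ * lam) + 2 * (C₁ * lam ^ ((1:ℝ)/2)) ^ 2 = Bc * lam := by
        rw [mul_pow, hhalf2, hBc]; ring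
      have hg2 : ∀ τ : ℝ, ‖deriv (deriv (fun t => ρ k t * (starRingEnd ℂ) (ρ l t))) τ‖ ≤
          Bc * lam := by
        intro τ
        exact le_trans (prod_conj_deriv2_bound (ρ k) (ρ l) (hρC k) (hρC l)
          C₀ (C₁ * lam ^ ((1:ℝ)/2)) (C₂ * lam) (hρ0 k) (hρ1 k) (hρ2 k)
          (hρ0 l) (hρ1 l) (hρ2 l) τ) (le_of_eq hBeq)
      have hosc : ‖J k l‖ ≤ 2 * R * (Bc * lam) / a ^ 2 := by
        have hb := osc_bound (fun t => ρ k t * (starRingEnd ℂ) (ρ l t)) R (Bc * lam)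
          hRpos (by positivity) hgC hgsupp hg2 a ha
        rw [hJ]
        dsimp only
        refine le_trans (le_of_eq ?_) hb
        congr 1
        refine integral_congr_ae (Filter.Eventually.of_forall fun τ => ?_)
        rw [haa]
        push_cast
        ring_nf
      have ha2 : c ^ 2 * lam * ((k:ℝ) - (l:ℝ)) ^ 2 ≤ a ^ 2 := by
        have h1 : (c * R * |(k:ℝ) - (l:ℝ)|) ^ 2 ≤ (ω k - ω l) ^ 2 := by
          rw [← sq_abs (ω k - ω l)]
          exact pow_le_pow_left₀ (by positivity) hsep 2
        calc c ^ 2 * lam * ((k:ℝ) - (l:ℝ)) ^ 2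
            = lam ^ 2 * ((c * R * |(k:ℝ) - (l:ℝ)|) ^ 2) := by
              rw [mul_pow, mul_pow, sq_abs, hRsq]
              field_simp
          _ ≤ lam ^ 2 * ((ω k - ω l) ^ 2) :=
              mul_le_mul_of_nonneg_left h1 (by positivity)
          _ = a ^ 2 := by rw [haa, mul_pow]
      have hpos2 : (0:ℝ) < c ^ 2 * lam * ((k:ℝ) - (l:ℝ)) ^ 2 := by positivity
      have hmid : 2 * R * (Bc * lam) / a ^ 2 ≤
          2 * R * (Bc * lam) / (c ^ 2 * lam * ((k:ℝ) - (l:ℝ)) ^ 2) := by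
        gcongr
      have heq2 : lam ^ ((1:ℝ)/2) * (2 * R * (Bc * lam) / (c ^ 2 * lam * ((k:ℝ) - (l:ℝ)) ^ 2))
          = D / ((k:ℝ) - (l:ℝ)) ^ 2 := by
        calc lam ^ ((1:ℝ)/2) * (2 * R * (Bc * lam) / (c ^ 2 * lam * ((k:ℝ) - (l:ℝ)) ^ 2))
            = (lam ^ ((1:ℝ)/2) * R) * (2 * Bc * lam / (c ^ 2 * lam * ((k:ℝ) - (l:ℝ)) ^ 2)) := by
              ring
          _ = 2 * Bc * lam / (c ^ 2 * lam * ((k:ℝ) - (l:ℝ)) ^ 2) := by rw [hhalf, one_mul]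
          _ = D / ((k:ℝ) - (l:ℝ)) ^ 2 := by
              rw [hD]
              field_simp
      calc lam ^ ((1:ℝ)/2) * ‖J k l‖
          ≤ lam ^ ((1:ℝ)/2) * (2 * R * (Bc * lam) / a ^ 2) :=
            mul_le_mul_of_nonneg_left hosc (Real.rpow_nonneg hlam0.le _)
        _ ≤ lam ^ ((1:ℝ)/2) * (2 * R * (Bc * lam) / (c ^ 2 * lam * ((k:ℝ) - (l:ℝ)) ^ 2)) :=
            mul_le_mul_of_nonneg_left hmid (Real.rpow_nonneg hlam0.le _)
        _ = D / ((k:ℝ) - (l:ℝ)) ^ 2 := heq2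
        _ = φ (k - l) := by
            rw [hφ]
            dsimp only
            rw [if_neg hkl]
            push_cast
            ring
  -- sums of φ along rows and columns
  have hsum1 : ∀ k : ℤ, (∑ l ∈ s, φ (k - l)) ≤ T := by
    intro k
    have hsm : Summable fun l : ℤ => φ (k - l) := by
      have h2 := hφS.comp_injective (i := fun l : ℤ => k - l)
        (fun x y h => by have : k - x = k - y := h; omega)
      exact h2
    refine (Summable.sum_le_tsum s (fun l _ => hφ0 _) hsm).trans (le_of_eq ?_)
    rw [hT]
    exact (Equiv.subLeft k).tsum_eq φ
  have hsum2 : ∀ l : ℤ, (∑ k ∈ s, φ (k - l)) ≤ T := by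
    intro l
    have hsm : Summable fun k : ℤ => φ (k - l) := by
      have h2 := hφS.comp_injective (i := fun k : ℤ => k - l)
        (fun x y h => by have : x - l = y - l := h; omega)
      exact h2
    refine (Summable.sum_le_tsum s (fun k _ => hφ0 _) hsm).trans (le_of_eq ?_)
    rw [hT]
    exact (Equiv.subRight l).tsum_eq φ
  have hptsum : (∑' k : ℤ, ‖p k‖ ^ 2) = ∑ k ∈ s, ‖p k‖ ^ 2 := by
    refine tsum_eq_sum fun k hk => ?_
    rw [hps k hk]
    simp
  -- final chain
  have hgoal_eq : (∫ τ : ℝ, ‖∑' k : ℤ,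
      Complex.exp (Complex.I * ((lam * ω k * τ : ℝ) : ℂ)) * ρ k τ * p k‖ ^ 2) =
      ∫ τ : ℝ, ‖∑' k : ℤ, F k τ‖ ^ 2 := rfl
  rw [hgoal_eq, hptsum]
  have main : lam ^ ((1:ℝ)/2) * (∫ τ : ℝ, ‖∑' k : ℤ, F k τ‖ ^ 2) ≤
      T * ∑ k ∈ s, ‖p k‖ ^ 2 := by
    calc lam ^ ((1:ℝ)/2) * (∫ τ : ℝ, ‖∑' k : ℤ, F k τ‖ ^ 2)
        = ∑ k ∈ s, ∑ l ∈ s,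
            lam ^ ((1:ℝ)/2) * ((p k * (starRingEnd ℂ) (p l)) * J k l).re := by
          rw [hI, Finset.mul_sum]
          refine Finset.sum_congr rfl fun k _ => ?_
          rw [Finset.mul_sum]
          refine Finset.sum_congr rfl fun l _ => ?_
          rw [hIdent k l]
      _ ≤ ∑ k ∈ s, ∑ l ∈ s, (‖p k‖ ^ 2 + ‖p l‖ ^ 2) / 2 * φ (k - l) := by
          refine Finset.sum_le_sum fun k _ => Finset.sum_le_sum fun l _ => ?_
          have h1 : ((p k * (starRingEnd ℂ) (p l)) * J k l).re ≤
              ‖p k‖ * ‖p l‖ * ‖J k l‖ := by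
            refine (Complex.re_le_norm _).trans (le_of_eq ?_)
            rw [norm_mul, norm_mul, RCLike.norm_conj]
          calc lam ^ ((1:ℝ)/2) * ((p k * (starRingEnd ℂ) (p l)) * J k l).re
              ≤ lam ^ ((1:ℝ)/2) * (‖p k‖ * ‖p l‖ * ‖J k l‖) :=
                mul_le_mul_of_nonneg_left h1 (Real.rpow_nonneg hlam0.le _)
            _ = (‖p k‖ * ‖p l‖) * (lam ^ ((1:ℝ)/2) * ‖J k l‖) := by ring
            _ ≤ (‖p k‖ * ‖p l‖) * φ (k - l) :=
                mul_le_mul_of_nonneg_left (hJb k l) (by positivity)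
            _ ≤ (‖p k‖ ^ 2 + ‖p l‖ ^ 2) / 2 * φ (k - l) := by
                refine mul_le_mul_of_nonneg_right ?_ (hφ0 _)
                nlinarith [sq_nonneg (‖p k‖ - ‖p l‖)]
      _ = ((∑ k ∈ s, ∑ l ∈ s, ‖p k‖ ^ 2 * φ (k - l)) +
            (∑ k ∈ s, ∑ l ∈ s, ‖p l‖ ^ 2 * φ (k - l))) / 2 := by
          rw [← Finset.sum_add_distrib, Finset.sum_div]
          refine Finset.sum_congr rfl fun k _ => ?_
          rw [← Finset.sum_add_distrib, Finset.sum_div]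
          refine Finset.sum_congr rfl fun l _ => ?_
          ring
      _ ≤ ((T * ∑ k ∈ s, ‖p k‖ ^ 2) + (T * ∑ k ∈ s, ‖p k‖ ^ 2)) / 2 := by
          have hS1 : (∑ k ∈ s, ∑ l ∈ s, ‖p k‖ ^ 2 * φ (k - l)) ≤ T * ∑ k ∈ s, ‖p k‖ ^ 2 := by
            calc (∑ k ∈ s, ∑ l ∈ s, ‖p k‖ ^ 2 * φ (k - l))
                = ∑ k ∈ s, ‖p k‖ ^ 2 * ∑ l ∈ s, φ (k - l) := by
                  refine Finset.sum_congr rfl fun k _ => ?_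
                  rw [Finset.mul_sum]
              _ ≤ ∑ k ∈ s, ‖p k‖ ^ 2 * T :=
                  Finset.sum_le_sum fun k _ =>
                    mul_le_mul_of_nonneg_left (hsum1 k) (by positivity)
              _ = T * ∑ k ∈ s, ‖p k‖ ^ 2 := by
                  rw [← Finset.sum_mul, mul_comm]
          have hS2 : (∑ k ∈ s, ∑ l ∈ s, ‖p l‖ ^ 2 * φ (k - l)) ≤ T * ∑ k ∈ s, ‖p k‖ ^ 2 := by
            rw [Finset.sum_comm]
            calc (∑ l ∈ s, ∑ k ∈ s, ‖p l‖ ^ 2 * φ (k - l))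
                = ∑ l ∈ s, ‖p l‖ ^ 2 * ∑ k ∈ s, φ (k - l) := by
                  refine Finset.sum_congr rfl fun l _ => ?_
                  rw [Finset.mul_sum]
              _ ≤ ∑ l ∈ s, ‖p l‖ ^ 2 * T :=
                  Finset.sum_le_sum fun l _ =>
                    mul_le_mul_of_nonneg_left (hsum2 l) (by positivity)
              _ = T * ∑ k ∈ s, ‖p k‖ ^ 2 := by
                  rw [← Finset.sum_mul, mul_comm]
          linarith
      _ = T * ∑ k ∈ s, ‖p k‖ ^ 2 := by ring
  exact main
end

section
/- Two-dimensional calculus estimate: There is a constant C such that for every λ ≥ 1, every real N ≥ 1, and every c₁, c₂ ∈ ℝ, ∫_{{w ∈ ℝ² : w₁ ≥ N λ^{−1/2}}} (1 + λ|w₁² − c₁|)^{−2} (1 + λ|w₂ − c₂|)^{−2} dw ≤ C λ^{−3/2} N^{−1}. -/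
open MeasureTheory Set

noncomputable def Maux : ℝ := ∫ y : ℝ, (1 + |y|) ^ (-(2 : ℝ))

lemma Maux_nonneg : 0 ≤ Maux :=
  integral_nonneg fun y => Real.rpow_nonneg (by positivity) _

lemma base_integrable : Integrable (fun y : ℝ => (1 + |y|) ^ (-(2 : ℝ))) := by
  have h : ((Module.finrank ℝ ℝ : ℝ)) < 2 := by
    norm_num [Module.finrank_self]
  simpa [Real.norm_eq_abs] using integrable_one_add_norm (E := ℝ) (r := 2) h

lemma one_dim_integrable (b c : ℝ) (hb : 0 < b) :
    Integrable (fun y : ℝ => (1 + b * |y - c|) ^ (-(2 : ℝ))) := by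
  have h : (fun y : ℝ => (1 + b * |y - c|) ^ (-(2 : ℝ)))
      = fun y : ℝ => (fun t : ℝ => (1 + |b * t|) ^ (-(2 : ℝ))) (y - c) := by
    funext y; simp only [abs_mul, abs_of_pos hb]
  rw [h]
  exact (base_integrable.comp_mul_left' hb.ne').comp_sub_right c

lemma one_dim_integral (b c : ℝ) (hb : 0 < b) :
    ∫ y : ℝ, (1 + b * |y - c|) ^ (-(2 : ℝ)) = b⁻¹ * Maux := by
  have h : (fun y : ℝ => (1 + b * |y - c|) ^ (-(2 : ℝ)))
      = fun y : ℝ => (fun t : ℝ => (1 + |b * t|) ^ (-(2 : ℝ))) (y - c) := by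
    funext y; simp only [abs_mul, abs_of_pos hb]
  rw [h, integral_sub_right_eq_self (fun t : ℝ => (1 + |b * t|) ^ (-(2 : ℝ))) c]
  have := Measure.integral_comp_mul_left (fun t : ℝ => (1 + |t|) ^ (-(2 : ℝ))) b
  rw [this, smul_eq_mul, abs_of_pos (inv_pos.mpr hb)]
  rfl

/-- **Two-dimensional calculus estimate.** There is a constant `C` such that for every
`λ ≥ 1`, every real `N ≥ 1`, and every `c₁, c₂ ∈ ℝ`,
`∫_{w₁ ≥ Nλ^{−1/2}} (1 + λ|w₁² − c₁|)^{−2}(1 + λ|w₂ − c₂|)^{−2} dw ≤ C λ^{−3/2} N^{−1}`. -/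
theorem two_dimensional_calculus_estimate :
    ∃ C : ℝ, ∀ lam : ℝ, 1 ≤ lam → ∀ N : ℝ, 1 ≤ N → ∀ c₁ c₂ : ℝ,
      ∫ w : ℝ × ℝ in {w : ℝ × ℝ | N * lam ^ (-(1 : ℝ) / 2) ≤ w.1},
          (1 + lam * |w.1 ^ 2 - c₁|) ^ (-(2 : ℝ)) * (1 + lam * |w.2 - c₂|) ^ (-(2 : ℝ)) ≤
        C * lam ^ (-(3 : ℝ) / 2) * N⁻¹ := by
  refine ⟨Maux * Maux, ?_⟩
  intro lam hlam N hN c₁ c₂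
  have hlam0 : (0 : ℝ) < lam := lt_of_lt_of_le one_pos hlam
  have hN0 : (0 : ℝ) < N := lt_of_lt_of_le one_pos hN
  set a : ℝ := N * lam ^ (-(1 : ℝ) / 2) with ha_def
  have hrpow : (0 : ℝ) < lam ^ (-(1 : ℝ) / 2) := Real.rpow_pos_of_pos hlam0 _
  have ha : 0 < a := mul_pos hN0 hrpow
  set G : ℝ → ℝ := fun u => (1 + lam * |u - c₁|) ^ (-(2 : ℝ)) with hG_def
  set g₂ : ℝ → ℝ := fun y => (1 + lam * |y - c₂|) ^ (-(2 : ℝ)) with hg2_def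
  have hGnn : ∀ u, 0 ≤ G u := fun u => Real.rpow_nonneg (by positivity) _
  have hGint : Integrable G := one_dim_integrable lam c₁ hlam0
  have hset : {w : ℝ × ℝ | a ≤ w.1} = Ici a ×ˢ (univ : Set ℝ) := by
    ext w; simp [Set.mem_prod]
  have split : (∫ w : ℝ × ℝ in {w : ℝ × ℝ | a ≤ w.1},
      (1 + lam * |w.1 ^ 2 - c₁|) ^ (-(2 : ℝ)) * (1 + lam * |w.2 - c₂|) ^ (-(2 : ℝ)))
      = (∫ x in Ici a, G (x ^ 2)) * ∫ y, g₂ y := by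
    rw [hset, Measure.volume_eq_prod, ← Measure.prod_restrict, Measure.restrict_univ]
    exact integral_prod_mul (fun x : ℝ => G (x ^ 2)) g₂
  -- change of variables for the first factor
  have himg : (fun x : ℝ => x ^ 2) '' Ioi a = Ioi (a ^ 2) := by
    ext u
    simp only [mem_image, mem_Ioi]
    constructor
    · rintro ⟨x, hx, rfl⟩; nlinarith
    · intro hu
      have hu0 : 0 ≤ u := le_trans (by positivity) hu.le
      refine ⟨Real.sqrt u, ?_, Real.sq_sqrt hu0⟩
      have : Real.sqrt (a ^ 2) < Real.sqrt u := Real.sqrt_lt_sqrt (by positivity) hu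
      rwa [Real.sqrt_sq ha.le] at this
  have hderiv : ∀ x ∈ Ioi a, HasDerivWithinAt (fun x : ℝ => x ^ 2) (2 * x) (Ioi a) x := by
    intro x _
    simpa using (hasDerivAt_pow 2 x).hasDerivWithinAt
  have hinj : InjOn (fun x : ℝ => x ^ 2) (Ioi a) := by
    intro x hx y hy hxy
    simp only [mem_Ioi] at hx hy
    have h1 : x ^ 2 = y ^ 2 := hxy
    nlinarith
  have hchange : (∫ u in Ioi (a ^ 2), G u) = ∫ x in Ioi a, |2 * x| • G (x ^ 2) := by
    rw [← himg]
    exact integral_image_eq_integral_abs_deriv_smul measurableSet_Ioi hderiv hinj G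
  have hint2 : IntegrableOn (fun x : ℝ => |2 * x| • G (x ^ 2)) (Ioi a) := by
    rw [← integrableOn_image_iff_integrableOn_abs_deriv_smul measurableSet_Ioi hderiv hinj G,
      himg]
    exact hGint.integrableOn
  have hGmeas : Measurable fun x : ℝ => G (x ^ 2) := by
    rw [hG_def]
    fun_prop
  have hpt : ∀ x ∈ Ioi a, G (x ^ 2) ≤ (2 * a)⁻¹ * (|2 * x| • G (x ^ 2)) := by
    intro x hx
    have hx' : a < x := hx
    have hxpos : 0 < x := ha.trans hx'
    rw [smul_eq_mul, abs_of_pos (by positivity : (0 : ℝ) < 2 * x)]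
    have h1 : (1 : ℝ) ≤ (2 * a)⁻¹ * (2 * x) := by
      have : (2 * a)⁻¹ * (2 * x) = x / a := by field_simp
      rw [this]
      exact (one_le_div ha).2 hx'.le
    calc G (x ^ 2) = 1 * G (x ^ 2) := (one_mul _).symm
      _ ≤ ((2 * a)⁻¹ * (2 * x)) * G (x ^ 2) := mul_le_mul_of_nonneg_right h1 (hGnn _)
      _ = (2 * a)⁻¹ * (2 * x * G (x ^ 2)) := by ring
  have hmono_int : IntegrableOn (fun x : ℝ => G (x ^ 2)) (Ioi a) := by
    refine Integrable.mono (hint2.const_mul (2 * a)⁻¹) hGmeas.aestronglyMeasurable ?_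
    refine (ae_restrict_iff' measurableSet_Ioi).2 (ae_of_all _ fun x hx => ?_)
    have h := hpt x hx
    have h0 : 0 ≤ G (x ^ 2) := hGnn _
    have h0' : 0 ≤ (2 * a)⁻¹ * (|2 * x| • G (x ^ 2)) := le_trans h0 h
    rw [Real.norm_eq_abs, Real.norm_eq_abs, abs_of_nonneg h0, abs_of_nonneg h0']
    exact h
  have hI1 : (∫ x in Ici a, G (x ^ 2)) ≤ (2 * a)⁻¹ * (lam⁻¹ * Maux) := by
    calc (∫ x in Ici a, G (x ^ 2)) = ∫ x in Ioi a, G (x ^ 2) :=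
          integral_Ici_eq_integral_Ioi
      _ ≤ ∫ x in Ioi a, (2 * a)⁻¹ * (|2 * x| • G (x ^ 2)) :=
          setIntegral_mono_on hmono_int (hint2.const_mul _) measurableSet_Ioi hpt
      _ = (2 * a)⁻¹ * ∫ x in Ioi a, |2 * x| • G (x ^ 2) := integral_const_mul _ _
      _ = (2 * a)⁻¹ * ∫ u in Ioi (a ^ 2), G u := by rw [hchange]
      _ ≤ (2 * a)⁻¹ * ∫ u, G u := by
          refine mul_le_mul_of_nonneg_left ?_ (by positivity)
          exact setIntegral_le_integral hGint (ae_of_all _ hGnn)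
      _ = (2 * a)⁻¹ * (lam⁻¹ * Maux) := by rw [hG_def, one_dim_integral lam c₁ hlam0]
  have hI2 : (∫ y, g₂ y) = lam⁻¹ * Maux := by
    rw [hg2_def]; exact one_dim_integral lam c₂ hlam0
  have hI1nn : 0 ≤ ∫ x in Ici a, G (x ^ 2) :=
    setIntegral_nonneg measurableSet_Ici fun x _ => hGnn _
  have e1 : (lam ^ (-(1 : ℝ) / 2))⁻¹ = lam ^ ((1 : ℝ) / 2) := by
    rw [← Real.rpow_neg hlam0.le]; norm_num
  have e2 : lam ^ ((1 : ℝ) / 2) * (lam⁻¹ * lam⁻¹) = lam ^ (-(3 : ℝ) / 2) := by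
    rw [show lam⁻¹ = lam ^ (-1 : ℝ) by rw [Real.rpow_neg_one], ← Real.rpow_add hlam0,
      ← Real.rpow_add hlam0]
    norm_num
  have hfin : ((2 * a)⁻¹ * (lam⁻¹ * Maux)) * (lam⁻¹ * Maux)
      = Maux * Maux * lam ^ (-(3 : ℝ) / 2) * N⁻¹ * 2⁻¹ := by
    calc ((2 * a)⁻¹ * (lam⁻¹ * Maux)) * (lam⁻¹ * Maux)
        = Maux * Maux * (lam ^ ((1 : ℝ) / 2) * (lam⁻¹ * lam⁻¹)) * N⁻¹ * 2⁻¹ := by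
          rw [ha_def, mul_inv, mul_inv, e1]; ring
      _ = Maux * Maux * lam ^ (-(3 : ℝ) / 2) * N⁻¹ * 2⁻¹ := by rw [e2]
  rw [split, hI2]
  calc (∫ x in Ici a, G (x ^ 2)) * (lam⁻¹ * Maux)
      ≤ ((2 * a)⁻¹ * (lam⁻¹ * Maux)) * (lam⁻¹ * Maux) :=
        mul_le_mul_of_nonneg_right hI1 (mul_nonneg (inv_nonneg.2 hlam0.le) Maux_nonneg)
    _ = Maux * Maux * lam ^ (-(3 : ℝ) / 2) * N⁻¹ * 2⁻¹ := hfin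
    _ ≤ Maux * Maux * lam ^ (-(3 : ℝ) / 2) * N⁻¹ := by
        have h0 : 0 ≤ Maux * Maux * lam ^ (-(3 : ℝ) / 2) * N⁻¹ := by
          have := Maux_nonneg; positivity
        linarith
end

section
/- One-dimensional calculus estimate: There is a constant C such that for every λ ≥ 1, every real N ≥ 1, and every c₁ ∈ ℝ, ∫_{Nλ^{−1/2}}^{∞} (1 + λ|w² − c₁|)^{−2} dw ≤ C λ^{−1/2} N^{−1}. -/
open MeasureTheory Set Filter

lemma aux_integrableOn_Ioi (b : ℝ) (hb : 0 < b) :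
    IntegrableOn (fun x : ℝ => ((1 + b * x) ^ 2)⁻¹) (Ioi 0) ∧
      ∫ x in Ioi (0:ℝ), ((1 + b * x) ^ 2)⁻¹ = 1 / b := by
  have hderiv : ∀ x ∈ Ici (0:ℝ),
      HasDerivAt (fun x : ℝ => -(1/b) * (1 + b * x)⁻¹) (((1 + b * x) ^ 2)⁻¹) x := by
    intro x hx
    have hpos : (0:ℝ) < 1 + b * x := by
      have : 0 ≤ b * x := mul_nonneg hb.le hx
      linarith
    have h1 : HasDerivAt (fun x : ℝ => 1 + b * x) b x := by
      simpa using (hasDerivAt_id x).const_mul b |>.const_add 1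
    have h2 := (h1.inv hpos.ne').const_mul (-(1/b))
    refine HasDerivAt.congr_deriv h2 ?_
    field_simp
  have hpos' : ∀ x ∈ Ioi (0:ℝ), (0:ℝ) ≤ ((1 + b * x) ^ 2)⁻¹ := by
    intro x _; positivity
  have htend : Tendsto (fun x : ℝ => -(1/b) * (1 + b * x)⁻¹) atTop (nhds 0) := by
    have h1 : Tendsto (fun x : ℝ => 1 + b * x) atTop atTop := by
      apply tendsto_atTop_add_const_left
      exact Tendsto.const_mul_atTop hb tendsto_id
    have h2 : Tendsto (fun x : ℝ => (1 + b * x)⁻¹) atTop (nhds 0) :=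
      h1.inv_tendsto_atTop
    have := h2.const_mul (-(1/b))
    simpa using this
  constructor
  · exact integrableOn_Ioi_deriv_of_nonneg' hderiv hpos' htend
  · rw [integral_Ioi_of_hasDerivAt_of_nonneg' hderiv hpos' htend]
    simp

lemma aux_integrable_comp_abs {f : ℝ → ℝ} (hf : IntegrableOn f (Ioi 0)) :
    Integrable (fun x : ℝ => f |x|) := by
  have hIoi : IntegrableOn (fun x : ℝ => f |x|) (Ioi 0) := by
    apply hf.congr_fun _ measurableSet_Ioi
    intro x hx
    show f x = f |x|
    rw [abs_of_pos hx]
  have hIic : IntegrableOn (fun x : ℝ => f |x|) (Iic 0) := by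
    rw [← Measure.map_neg_eq_self (volume : Measure ℝ)]
    have m : MeasurableEmbedding fun x : ℝ => -x := (Homeomorph.neg ℝ).measurableEmbedding
    rw [m.integrableOn_map_iff]
    simp_rw [Function.comp_def, abs_neg, neg_preimage, neg_Iic, neg_zero]
    exact (integrableOn_Ici_iff_integrableOn_Ioi).mpr hIoi
  have := hIic.union hIoi
  rwa [Iic_union_Ioi, integrableOn_univ] at this

/-- **One-dimensional calculus estimate.** There is a constant `C` such that for every
`λ ≥ 1`, every real `N ≥ 1`, and every `c₁ ∈ ℝ`,
`∫_{Nλ^{−1/2}}^{∞} (1 + λ|w² − c₁|)^{−2} dw ≤ C λ^{−1/2} N^{−1}`. -/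
theorem one_dimensional_calculus_estimate :
    ∃ C : ℝ, ∀ lam : ℝ, 1 ≤ lam → ∀ N : ℝ, 1 ≤ N → ∀ c₁ : ℝ,
      ∫ w in Set.Ici (N * lam ^ (-(1 : ℝ) / 2)),
          (1 + lam * |w ^ 2 - c₁|) ^ (-(2 : ℝ)) ≤
        C * lam ^ (-(1 : ℝ) / 2) * N⁻¹ := by
  refine ⟨2, fun lam hlam N hN c₁ => ?_⟩
  have hlam0 : (0:ℝ) < lam := lt_of_lt_of_le one_pos hlam
  have hN0 : (0:ℝ) < N := lt_of_lt_of_le one_pos hN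
  set r : ℝ := lam ^ (-(1 : ℝ) / 2) with hr
  have hr0 : 0 < r := Real.rpow_pos_of_pos hlam0 _
  set a : ℝ := N * r with ha
  have ha0 : 0 < a := mul_pos hN0 hr0
  set b : ℝ := lam * a with hbdef
  have hb0 : 0 < b := mul_pos hlam0 ha0
  set s : ℝ := Real.sqrt c₁ with hs
  have hs0 : 0 ≤ s := Real.sqrt_nonneg _
  -- the dominating function
  set g : ℝ → ℝ := fun x => ((1 + b * |x - s|) ^ 2)⁻¹ with hg
  obtain ⟨hint0, hval0⟩ := aux_integrableOn_Ioi b hb0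
  have hg_int : Integrable g := by
    have h1 : Integrable (fun x : ℝ => ((1 + b * |x|) ^ 2)⁻¹) :=
      aux_integrable_comp_abs hint0
    exact h1.comp_sub_right s
  have hg_val : ∫ x : ℝ, g x = 2 / b := by
    have h1 : ∫ x : ℝ, g x = ∫ x : ℝ, ((1 + b * |x|) ^ 2)⁻¹ :=
      integral_sub_right_eq_self (fun x : ℝ => ((1 + b * |x|) ^ 2)⁻¹) s
    rw [h1, integral_comp_abs (f := fun x : ℝ => ((1 + b * x) ^ 2)⁻¹), hval0]
    ring
  have hg_nonneg : ∀ x, 0 ≤ g x := by intro x; positivity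
  -- pointwise comparison on `Ici a`
  have key : ∀ w ∈ Ici a, (1 + lam * |w ^ 2 - c₁|) ^ (-(2 : ℝ)) ≤ g w := by
    intro w hw
    have hwa : a ≤ w := hw
    have hw0 : 0 < w := lt_of_lt_of_le ha0 hwa
    have habs : a * |w - s| ≤ |w ^ 2 - c₁| := by
      rcases le_or_gt 0 c₁ with hc | hc
      · have hsq : s ^ 2 = c₁ := Real.sq_sqrt hc
        have h1 : a * |w - s| ≤ (w + s) * |w - s| := by
          apply mul_le_mul_of_nonneg_right _ (abs_nonneg _)
          linarith
        have h2 : (w + s) * |w - s| = |w ^ 2 - c₁| := by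
          rw [← hsq]
          have : w ^ 2 - s ^ 2 = (w + s) * (w - s) := by ring
          rw [this, abs_mul, abs_of_nonneg (by linarith : (0:ℝ) ≤ w + s)]
        linarith
      · have hsz : s = 0 := Real.sqrt_eq_zero_of_nonpos hc.le
        rw [hsz, sub_zero, abs_of_pos hw0]
        have h1 : a * w ≤ w * w := mul_le_mul_of_nonneg_right hwa hw0.le
        have h2 : w ^ 2 ≤ |w ^ 2 - c₁| := by
          rw [abs_of_nonneg (by nlinarith)]
          nlinarith
        nlinarith
    have hbase : (0:ℝ) < 1 + lam * |w ^ 2 - c₁| := by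
      have : 0 ≤ lam * |w ^ 2 - c₁| := mul_nonneg hlam0.le (abs_nonneg _)
      linarith
    have hle : 1 + b * |w - s| ≤ 1 + lam * |w ^ 2 - c₁| := by
      have : b * |w - s| = lam * (a * |w - s|) := by rw [hbdef]; ring
      rw [this]
      have := mul_le_mul_of_nonneg_left habs hlam0.le
      linarith
    have hb1 : (0:ℝ) < 1 + b * |w - s| := by
      have : 0 ≤ b * |w - s| := mul_nonneg hb0.le (abs_nonneg _)
      linarith
    have hre : (1 + lam * |w ^ 2 - c₁|) ^ (-(2 : ℝ))
        = ((1 + lam * |w ^ 2 - c₁|) ^ 2)⁻¹ := by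
      rw [Real.rpow_neg hbase.le, show ((2:ℝ)) = ((2:ℕ):ℝ) by norm_num,
        Real.rpow_natCast]
    rw [hre, hg]
    apply inv_anti₀ (by positivity)
    exact pow_le_pow_left₀ hb1.le hle 2
  -- integrability of the integrand on `Ici a`
  have hf_meas : AEStronglyMeasurable
      (fun w : ℝ => (1 + lam * |w ^ 2 - c₁|) ^ (-(2 : ℝ)))
      (volume.restrict (Ici a)) := by
    apply Continuous.aestronglyMeasurable
    apply Continuous.rpow_const
    · continuity
    · intro x
      left
      have : 0 ≤ lam * |x ^ 2 - c₁| := mul_nonneg hlam0.le (abs_nonneg _)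
      positivity
  have hf_int : IntegrableOn (fun w : ℝ => (1 + lam * |w ^ 2 - c₁|) ^ (-(2 : ℝ)))
      (Ici a) := by
    apply Integrable.mono hg_int.integrableOn hf_meas
    rw [ae_restrict_iff' measurableSet_Ici]
    filter_upwards with w hw
    rw [Real.norm_eq_abs, Real.norm_eq_abs,
      abs_of_nonneg (Real.rpow_nonneg (by positivity) _),
      abs_of_nonneg (hg_nonneg w)]
    exact key w hw
  calc ∫ w in Ici a, (1 + lam * |w ^ 2 - c₁|) ^ (-(2 : ℝ))
      ≤ ∫ w in Ici a, g w :=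
        setIntegral_mono_on hf_int hg_int.integrableOn measurableSet_Ici key
    _ ≤ ∫ w : ℝ, g w := setIntegral_le_integral hg_int
        (Filter.Eventually.of_forall hg_nonneg)
    _ = 2 / b := hg_val
    _ = 2 * r * N⁻¹ := by
        have hrr : r * r = lam⁻¹ := by
          rw [hr, ← Real.rpow_add hlam0]
          norm_num
          exact Real.rpow_neg_one lam
        rw [hbdef, ha, div_eq_iff (by positivity : lam * (N * r) ≠ 0)]
        calc (2:ℝ) = 2 * (r * r * lam) * (N⁻¹ * N) := by
              rw [hrr, inv_mul_cancel₀ hlam0.ne', inv_mul_cancel₀ hN0.ne']; ring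
          _ = 2 * r * N⁻¹ * (lam * (N * r)) := by ring
end
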